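/- In the special uniform case (all sensors initially on the barrier), if λ* > 0, then λ* equals the maximum of the finite set Λ' = {x_j + r − 2rj : 1 ≤ j ≤ n} ∪ {L − 2r(n−i) − (x_i + r) : 1 ≤ i ≤ n} ∪ {(x_j − x_i − 2r(j−i))/2 : 1 ≤ i < j ≤ n}. -/

import Mathlib

/-- Uniform case: placement `y` of sensors `1, …, n`, all with range `r`, covers `[0, L]`. -/
def Covers (n : ℕ) (L r : ℝ) (y : ℕ → ℝ) : Prop :=
  Set.Icc (0 : ℝ) L ⊆ ⋃ i ∈ Set.Icc 1 n, Set.Icc (y i - r) (y i + r)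

/-- The maximum movement `max_{1 ≤ i ≤ n} |x i - y i|` of the placement `y`. -/
noncomputable def MaxMove (n : ℕ) (x y : ℕ → ℝ) : ℝ :=
  sSup ((fun i => |x i - y i|) '' Set.Icc 1 n)

/-- `λ*`: the infimum of the maximum movement over all covering placements. -/
noncomputable def LamStar (n : ℕ) (L r : ℝ) (x : ℕ → ℝ) : ℝ :=
  sInf (MaxMove n x '' {y : ℕ → ℝ | Covers n L r y})

open Set MeasureTheory
open scoped ENNReal

lemma lengthLE (S : Finset ℕ) (y : ℕ → ℝ) (r a b : ℝ) (hr : 0 ≤ r)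
    (h : Set.Ioo a b ⊆ ⋃ i ∈ S, Set.Icc (y i - r) (y i + r)) :
    b - a ≤ 2 * r * S.card := by
  have hpos : (0:ℝ) ≤ 2 * r * S.card := by positivity
  rcases le_or_gt b a with hba | hba
  · linarith
  have h1 : volume (Set.Ioo a b) ≤ ∑ i ∈ S, volume (Set.Icc (y i - r) (y i + r)) :=
    le_trans (measure_mono h) (measure_biUnion_finset_le S _)
  have h2 : ∀ i ∈ S, volume (Set.Icc (y i - r) (y i + r)) = ENNReal.ofReal (2*r) := by
    intro i _
    rw [Real.volume_Icc]
    congr 1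
    ring
  rw [Real.volume_Ioo, Finset.sum_congr rfl h2, Finset.sum_const, nsmul_eq_mul] at h1
  have h3 : (S.card : ℝ≥0∞) * ENNReal.ofReal (2*r) = ENNReal.ofReal (2 * r * S.card) := by
    rw [← ENNReal.ofReal_natCast S.card, ← ENNReal.ofReal_mul (by positivity : (0:ℝ) ≤ (S.card:ℝ))]
    congr 1
    ring
  rw [h3] at h1
  exact (ENNReal.ofReal_le_ofReal_iff hpos).mp h1

lemma abs_sub_le_maxMove (n : ℕ) (x y : ℕ → ℝ) {i : ℕ} (h1 : 1 ≤ i) (h2 : i ≤ n) :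
    |x i - y i| ≤ MaxMove n x y :=
  le_csSup (((Set.finite_Icc 1 n).image _).bddAbove) ⟨i, ⟨h1, h2⟩, rfl⟩

lemma maxMove_nonneg {n : ℕ} (hn : 1 ≤ n) (x y : ℕ → ℝ) : 0 ≤ MaxMove n x y :=
  (abs_nonneg _).trans (abs_sub_le_maxMove n x y le_rfl hn)

lemma maxMove_le {n : ℕ} (hn : 1 ≤ n) (x y : ℕ → ℝ) {c : ℝ}
    (h : ∀ i, 1 ≤ i → i ≤ n → |x i - y i| ≤ c) : MaxMove n x y ≤ c := by
  have hne : ((fun i => |x i - y i|) '' Set.Icc 1 n).Nonempty :=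
    ⟨|x 1 - y 1|, ⟨1, ⟨le_rfl, hn⟩, rfl⟩⟩
  refine csSup_le hne ?_
  rintro v ⟨i, hi, rfl⟩
  exact h i hi.1 hi.2

noncomputable def place (n : ℕ) (L r lam : ℝ) (x : ℕ → ℝ) : ℕ → ℝ := fun i =>
  if h : i ≤ n then
    max (L - r - 2*r*((n:ℝ) - (i:ℝ)))
      ((Finset.Icc i n).sup' (Finset.nonempty_Icc.mpr h)
        (fun k => x k - lam - 2*r*((k:ℝ) - (i:ℝ))))
  else 0

lemma place_eq (n : ℕ) (L r lam : ℝ) (x : ℕ → ℝ) {i : ℕ} (h : i ≤ n) :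
    place n L r lam x i =
    max (L - r - 2*r*((n:ℝ) - (i:ℝ)))
      ((Finset.Icc i n).sup' (Finset.nonempty_Icc.mpr h)
        (fun k => x k - lam - 2*r*((k:ℝ) - (i:ℝ)))) := by
  simp [place, h]

lemma place_first (n : ℕ) (hn : 1 ≤ n) (L r lam : ℝ) (hr : 0 < r) (x : ℕ → ℝ)
    (hcap : L ≤ 2 * n * r)
    (H1 : ∀ j, 1 ≤ j → j ≤ n → x j + r - 2 * r * (j : ℝ) ≤ lam) :
    place n L r lam x 1 ≤ r := by
  rw [place_eq n L r lam x hn]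
  apply max_le
  · have h1 : (1:ℝ) ≤ (n:ℝ) := by exact_mod_cast hn
    push_cast
    linarith
  · apply Finset.sup'_le
    intro k hk
    obtain ⟨hk1, hk2⟩ := Finset.mem_Icc.mp hk
    have := H1 k hk1 hk2
    push_cast
    linarith

lemma place_last (n : ℕ) (hn : 1 ≤ n) (L r lam : ℝ) (x : ℕ → ℝ) :
    L - r ≤ place n L r lam x n := by
  rw [place_eq n L r lam x le_rfl]
  refine le_trans ?_ (le_max_left _ _)
  have : ((n:ℝ) - (n:ℝ)) = 0 := by ring
  rw [this]
  ring_nf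
  linarith [le_refl (L - r)]

lemma place_gap (n : ℕ) (L r lam : ℝ) (hr : 0 < r) (x : ℕ → ℝ) {i : ℕ}
    (hi1 : 1 ≤ i) (hin : i < n) :
    place n L r lam x (i+1) ≤ place n L r lam x i + 2*r := by
  rw [place_eq n L r lam x (by omega : i + 1 ≤ n), place_eq n L r lam x (by omega : i ≤ n)]
  apply max_le
  · refine le_trans ?_ (add_le_add_left (le_max_left _ _) (2*r))
    push_cast
    linarith
  · apply Finset.sup'_le
    intro k hk
    obtain ⟨hk1, hk2⟩ := Finset.mem_Icc.mp hk
    have hmem : k ∈ Finset.Icc i n := Finset.mem_Icc.mpr ⟨by omega, hk2⟩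
    have hle := Finset.le_sup' (fun k => x k - lam - 2*r*((k:ℝ) - (i:ℝ))) hmem
    refine le_trans ?_ (add_le_add_left (le_trans hle (le_max_right _ _)) (2*r))
    push_cast
    linarith

lemma place_move (n : ℕ) (L r lam : ℝ) (hr : 0 < r) (hlam : 0 ≤ lam) (x : ℕ → ℝ)
    {i : ℕ} (hi1 : 1 ≤ i) (hin : i ≤ n)
    (H2 : L - 2 * r * ((n : ℝ) - (i : ℝ)) - (x i + r) ≤ lam)
    (H3 : ∀ k, i < k → k ≤ n → (x k - x i - 2 * r * ((k : ℝ) - (i : ℝ))) / 2 ≤ lam) :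
    x i - lam ≤ place n L r lam x i ∧ place n L r lam x i ≤ x i + lam := by
  rw [place_eq n L r lam x hin]
  constructor
  · refine le_trans ?_ (le_trans (Finset.le_sup'
      (fun k => x k - lam - 2*r*((k:ℝ) - (i:ℝ)))
      (Finset.mem_Icc.mpr ⟨le_rfl, hin⟩)) (le_max_right _ _))
    have : ((i:ℝ) - (i:ℝ)) = 0 := by ring
    rw [this]
    linarith
  · apply max_le
    · linarith
    · apply Finset.sup'_le
      intro k hk
      obtain ⟨hk1, hk2⟩ := Finset.mem_Icc.mp hk
      rcases eq_or_lt_of_le hk1 with heq | hlt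
      · subst heq
        have : ((i:ℝ) - (i:ℝ)) = 0 := by ring
        rw [this]
        linarith
      · have := H3 k hlt hk2
        linarith

lemma place_covers (n : ℕ) (hn : 1 ≤ n) (L r lam : ℝ) (hr : 0 < r) (x : ℕ → ℝ)
    (hcap : L ≤ 2 * n * r)
    (H1 : ∀ j, 1 ≤ j → j ≤ n → x j + r - 2 * r * (j : ℝ) ≤ lam) :
    Covers n L r (place n L r lam x) := by
  intro t ht
  classical
  have hP : ∃ m, 1 ≤ m ∧ m ≤ n ∧ t ≤ place n L r lam x m + r :=
    ⟨n, hn, le_rfl, by have := place_last n hn L r lam x; have := ht.2; linarith⟩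
  obtain ⟨hm1, hmn, hmt⟩ := Nat.find_spec hP
  rcases eq_or_lt_of_le hm1 with heq | hlt
  · refine Set.mem_biUnion (⟨hm1, hmn⟩ : Nat.find hP ∈ Set.Icc 1 n) ⟨?_, hmt⟩
    have h1 : place n L r lam x (Nat.find hP) ≤ r := by
      rw [← heq]
      exact place_first n hn L r lam hr x hcap H1
    have := ht.1
    linarith
  · have hfail := Nat.find_min hP (show Nat.find hP - 1 < Nat.find hP by omega)
    push_neg at hfail
    have h1 : 1 ≤ Nat.find hP - 1 := by omega
    have h2 : Nat.find hP - 1 ≤ n := by omega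
    have h3 : place n L r lam x (Nat.find hP - 1) + r < t := hfail h1 h2
    have h4 : place n L r lam x ((Nat.find hP - 1) + 1) ≤
        place n L r lam x (Nat.find hP - 1) + 2*r :=
      place_gap n L r lam hr x h1 (by omega)
    have h5 : Nat.find hP - 1 + 1 = Nat.find hP := by omega
    rw [h5] at h4
    exact Set.mem_biUnion (⟨hm1, hmn⟩ : Nat.find hP ∈ Set.Icc 1 n) ⟨by linarith, hmt⟩


section Lower

variable {n : ℕ} {L r : ℝ} {x y : ℕ → ℝ}

lemma lower1 (hn : 1 ≤ n) (hr : 0 < r)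
    (hsort : ∀ i j, 1 ≤ i → i ≤ j → j ≤ n → x i ≤ x j)
    (hon : ∀ i, 1 ≤ i → i ≤ n → x i ∈ Set.Icc (0 : ℝ) L)
    (hy : Covers n L r y) {j : ℕ} (hj1 : 1 ≤ j) (hjn : j ≤ n) :
    x j + r - 2 * r * (j : ℝ) ≤ MaxMove n x y := by
  set lam := MaxMove n x y with hlamdef
  have hlam0 : 0 ≤ lam := maxMove_nonneg hn x y
  set b := min L (x j - lam - r) with hbdef
  have hsub : Set.Ioo (0:ℝ) b ⊆ ⋃ i ∈ Finset.Icc 1 (j-1), Set.Icc (y i - r) (y i + r) := by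
    intro t ht
    have htL : t ∈ Set.Icc (0:ℝ) L := ⟨ht.1.le, (lt_of_lt_of_le ht.2 (min_le_left _ _)).le⟩
    obtain ⟨i, hi, hti⟩ := Set.mem_iUnion₂.mp (hy htL)
    by_cases hij : j ≤ i
    · exfalso
      have hxx : x j ≤ x i := hsort j i hj1 hij hi.2
      have hmv := (abs_le.mp (abs_sub_le_maxMove n x y hi.1 hi.2)).2
      rw [← hlamdef] at hmv
      have h1 : x i - lam ≤ y i := by linarith
      have h2 : t < b := ht.2
      have h3 : b ≤ x j - lam - r := min_le_right _ _
      have h4 : y i - r ≤ t := hti.1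
      linarith
    · push_neg at hij
      exact Set.mem_biUnion (Finset.mem_Icc.mpr ⟨hi.1, by omega⟩) hti
  have hlen := lengthLE (Finset.Icc 1 (j-1)) y r 0 b hr.le hsub
  have hcard : ((Finset.Icc 1 (j-1)).card : ℝ) = (j:ℝ) - 1 := by
    rw [Nat.card_Icc]
    have : j - 1 + 1 - 1 = j - 1 := by omega
    rw [this, Nat.cast_sub hj1, Nat.cast_one]
  rw [hcard] at hlen
  rcases min_cases L (x j - lam - r) with ⟨hb1, hb2⟩ | ⟨hb1, hb2⟩
  · have hxL : x j ≤ L := (hon j hj1 hjn).2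
    linarith
  · rw [hbdef, hb1] at hlen
    linarith

lemma lower2 (hn : 1 ≤ n) (hr : 0 < r)
    (hsort : ∀ i j, 1 ≤ i → i ≤ j → j ≤ n → x i ≤ x j)
    (hon : ∀ i, 1 ≤ i → i ≤ n → x i ∈ Set.Icc (0 : ℝ) L)
    (hy : Covers n L r y) {i : ℕ} (hi1 : 1 ≤ i) (hin : i ≤ n) :
    L - 2 * r * ((n : ℝ) - (i : ℝ)) - (x i + r) ≤ MaxMove n x y := by
  set lam := MaxMove n x y with hlamdef
  have hlam0 : 0 ≤ lam := maxMove_nonneg hn x y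
  set a := x i + lam + r with hadef
  have hsub : Set.Ioo a L ⊆ ⋃ k ∈ Finset.Icc (i+1) n, Set.Icc (y k - r) (y k + r) := by
    intro t ht
    have hx0 : 0 ≤ x i := (hon i hi1 hin).1
    have htL : t ∈ Set.Icc (0:ℝ) L := ⟨by have := ht.1; linarith, ht.2.le⟩
    obtain ⟨k, hk, htk⟩ := Set.mem_iUnion₂.mp (hy htL)
    by_cases hki : k ≤ i
    · exfalso
      have hxx : x k ≤ x i := hsort k i hk.1 hki hin
      have hmv := (abs_le.mp (abs_sub_le_maxMove n x y hk.1 hk.2)).1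
      rw [← hlamdef] at hmv
      have h1 : y k ≤ x k + lam := by linarith
      have h4 : t ≤ y k + r := htk.2
      have := ht.1
      linarith
    · push_neg at hki
      exact Set.mem_biUnion (Finset.mem_Icc.mpr ⟨hki, hk.2⟩) htk
  have hlen := lengthLE (Finset.Icc (i+1) n) y r a L hr.le hsub
  have hcard : ((Finset.Icc (i+1) n).card : ℝ) = (n:ℝ) - (i:ℝ) := by
    rw [Nat.card_Icc]
    have : n + 1 - (i + 1) = n - i := by omega
    rw [this, Nat.cast_sub hin]
  rw [hcard] at hlen
  linarith

lemma lower3 (hn : 1 ≤ n) (hr : 0 < r)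
    (hsort : ∀ i j, 1 ≤ i → i ≤ j → j ≤ n → x i ≤ x j)
    (hon : ∀ i, 1 ≤ i → i ≤ n → x i ∈ Set.Icc (0 : ℝ) L)
    (hy : Covers n L r y) {i j : ℕ} (hi1 : 1 ≤ i) (hij : i < j) (hjn : j ≤ n) :
    (x j - x i - 2 * r * ((j : ℝ) - (i : ℝ))) / 2 ≤ MaxMove n x y := by
  set lam := MaxMove n x y with hlamdef
  have hlam0 : 0 ≤ lam := maxMove_nonneg hn x y
  set a := x i + lam + r with hadef
  set b := x j - lam - r with hbdef
  have hin : i ≤ n := by omega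
  have hj1 : 1 ≤ j := by omega
  have hsub : Set.Ioo a b ⊆ ⋃ k ∈ Finset.Icc (i+1) (j-1), Set.Icc (y k - r) (y k + r) := by
    intro t ht
    have hx0 : 0 ≤ x i := (hon i hi1 hin).1
    have hxL : x j ≤ L := (hon j hj1 hjn).2
    have htL : t ∈ Set.Icc (0:ℝ) L := by
      constructor
      · have := ht.1; simp only [hadef] at this; linarith
      · have := ht.2; simp only [hbdef] at this; linarith
    obtain ⟨k, hk, htk⟩ := Set.mem_iUnion₂.mp (hy htL)
    by_cases hki : k ≤ i
    · exfalso
      have hxx : x k ≤ x i := hsort k i hk.1 hki hin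
      have hmv := (abs_le.mp (abs_sub_le_maxMove n x y hk.1 hk.2)).1
      rw [← hlamdef] at hmv
      have h4 : t ≤ y k + r := htk.2
      have := ht.1
      simp only [hadef] at this
      linarith
    · by_cases hkj : j ≤ k
      · exfalso
        have hxx : x j ≤ x k := hsort j k hj1 hkj hk.2
        have hmv := (abs_le.mp (abs_sub_le_maxMove n x y hk.1 hk.2)).2
        rw [← hlamdef] at hmv
        have h4 : y k - r ≤ t := htk.1
        have := ht.2
        simp only [hbdef] at this
        linarith
      · push_neg at hki hkj
        exact Set.mem_biUnion (Finset.mem_Icc.mpr ⟨hki, by omega⟩) htk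
  have hlen := lengthLE (Finset.Icc (i+1) (j-1)) y r a b hr.le hsub
  have hcard : ((Finset.Icc (i+1) (j-1)).card : ℝ) = (j:ℝ) - (i:ℝ) - 1 := by
    rw [Nat.card_Icc]
    have h5 : j - 1 + 1 - (i + 1) = j - (i + 1) := by omega
    rw [h5, Nat.cast_sub (by omega : i + 1 ≤ j)]
    push_cast
    ring
  rw [hcard] at hlen
  simp only [hadef, hbdef] at hlen
  linarith

end Lower


/-- Special uniform case (all sensors initially on the barrier): if `λ* > 0`, then `λ*` is
the maximum of the set
`Λ' = {x j + r − 2rj : 1 ≤ j ≤ n} ∪ {L − 2r(n−i) − (x i + r) : 1 ≤ i ≤ n}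
   ∪ {(x j − x i − 2r(j−i))/2 : 1 ≤ i < j ≤ n}`. -/
theorem stmt12 (n : ℕ) (hn : 1 ≤ n) (L r : ℝ) (hL : 0 < L) (hr : 0 < r)
    (x : ℕ → ℝ) (hsort : ∀ i j, 1 ≤ i → i ≤ j → j ≤ n → x i ≤ x j)
    (hcap : L ≤ 2 * n * r)
    (hon : ∀ i, 1 ≤ i → i ≤ n → x i ∈ Set.Icc (0 : ℝ) L)
    (hlam : 0 < LamStar n L r x) :
    IsGreatest {v : ℝ |
        (∃ j, 1 ≤ j ∧ j ≤ n ∧ v = x j + r - 2 * r * (j : ℝ)) ∨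
        (∃ i, 1 ≤ i ∧ i ≤ n ∧ v = L - 2 * r * ((n : ℝ) - (i : ℝ)) - (x i + r)) ∨
        (∃ i j, 1 ≤ i ∧ i < j ∧ j ≤ n ∧
          v = (x j - x i - 2 * r * ((j : ℝ) - (i : ℝ))) / 2)}
      (LamStar n L r x) := by
  classical
  set S : Set ℝ := {v : ℝ |
      (∃ j, 1 ≤ j ∧ j ≤ n ∧ v = x j + r - 2 * r * (j : ℝ)) ∨
      (∃ i, 1 ≤ i ∧ i ≤ n ∧ v = L - 2 * r * ((n : ℝ) - (i : ℝ)) - (x i + r)) ∨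
      (∃ i j, 1 ≤ i ∧ i < j ∧ j ≤ n ∧
        v = (x j - x i - 2 * r * ((j : ℝ) - (i : ℝ))) / 2)} with hSdef
  have hfin : S.Finite := by
    have f1 : ((fun j : ℕ => x j + r - 2*r*(j:ℝ)) '' Set.Icc 1 n).Finite :=
      (Set.finite_Icc 1 n).image _
    have f2 : ((fun i : ℕ => L - 2*r*((n:ℝ) - (i:ℝ)) - (x i + r)) '' Set.Icc 1 n).Finite :=
      (Set.finite_Icc 1 n).image _
    have f3 : ((fun p : ℕ × ℕ => (x p.2 - x p.1 - 2*r*((p.2:ℝ) - (p.1:ℝ)))/2) ''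
        (Set.Icc 1 n ×ˢ Set.Icc 1 n)).Finite :=
      ((Set.finite_Icc 1 n).prod (Set.finite_Icc 1 n)).image _
    refine ((f1.union f2).union f3).subset ?_
    rintro v (⟨j, h1, h2, rfl⟩ | ⟨i, h1, h2, rfl⟩ | ⟨i, j, h1, h2, h3, rfl⟩)
    · exact Or.inl (Or.inl ⟨j, ⟨h1, h2⟩, rfl⟩)
    · exact Or.inl (Or.inr ⟨i, ⟨h1, h2⟩, rfl⟩)
    · exact Or.inr ⟨(i, j), ⟨⟨h1, by omega⟩, ⟨by omega, h3⟩⟩, rfl⟩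
  have hne : S.Nonempty := ⟨x 1 + r - 2 * r * ((1:ℕ):ℝ), Or.inl ⟨1, le_rfl, hn, rfl⟩⟩
  obtain ⟨M, hMS, hMmax⟩ : ∃ M ∈ S, ∀ v ∈ S, v ≤ M := by
    obtain ⟨M, hMS, hmax⟩ := Set.Finite.exists_maximalFor id S hfin hne
    refine ⟨M, hMS, fun v hv => ?_⟩
    by_contra hc
    push_neg at hc
    exact absurd (hmax hv hc.le) (not_le.mpr hc)
  set lam0 := max M 0 with hlam0def
  have hlam0 : 0 ≤ lam0 := le_max_right _ _
  have H1 : ∀ j, 1 ≤ j → j ≤ n → x j + r - 2 * r * (j : ℝ) ≤ lam0 :=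
    fun j h1 h2 => le_trans (hMmax _ (Or.inl ⟨j, h1, h2, rfl⟩)) (le_max_left _ _)
  have H2 : ∀ i, 1 ≤ i → i ≤ n → L - 2 * r * ((n : ℝ) - (i : ℝ)) - (x i + r) ≤ lam0 :=
    fun i h1 h2 => le_trans (hMmax _ (Or.inr (Or.inl ⟨i, h1, h2, rfl⟩))) (le_max_left _ _)
  have H3 : ∀ i j, 1 ≤ i → i < j → j ≤ n →
      (x j - x i - 2 * r * ((j : ℝ) - (i : ℝ))) / 2 ≤ lam0 :=
    fun i j h1 h2 h3 =>
      le_trans (hMmax _ (Or.inr (Or.inr ⟨i, j, h1, h2, h3, rfl⟩))) (le_max_left _ _)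
  set y := place n L r lam0 x with hydef
  have hcov : Covers n L r y := place_covers n hn L r lam0 hr x hcap H1
  have hmu : MaxMove n x y ≤ lam0 := by
    apply maxMove_le hn
    intro i h1 h2
    obtain ⟨hl, hu⟩ := place_move n L r lam0 hr hlam0 x h1 h2 (H2 i h1 h2)
      (fun k hik hkn => H3 i k h1 hik hkn)
    rw [← hydef] at hl hu
    rw [abs_le]
    constructor <;> linarith
  have hmemset : MaxMove n x y ∈ MaxMove n x '' {y : ℕ → ℝ | Covers n L r y} :=
    ⟨y, hcov, rfl⟩
  have hbdd : BddBelow (MaxMove n x '' {y : ℕ → ℝ | Covers n L r y}) := by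
    refine ⟨0, ?_⟩
    rintro v ⟨y', _, rfl⟩
    exact maxMove_nonneg hn x y'
  have hle : LamStar n L r x ≤ lam0 := le_trans (csInf_le hbdd hmemset) hmu
  have hge : ∀ v ∈ S, v ≤ LamStar n L r x := by
    intro v hv
    apply le_csInf ⟨_, hmemset⟩
    rintro b ⟨y', hy', rfl⟩
    rcases hv with ⟨j, h1, h2, rfl⟩ | ⟨i, h1, h2, rfl⟩ | ⟨i, j, h1, h2, h3, rfl⟩
    · exact lower1 hn hr hsort hon hy' h1 h2
    · exact lower2 hn hr hsort hon hy' h1 h2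
    · exact lower3 hn hr hsort hon hy' h1 h2 h3
  have hM_le : M ≤ LamStar n L r x := hge M hMS
  have hM0 : 0 ≤ M := by
    by_contra hc
    push_neg at hc
    have hz : lam0 = 0 := max_eq_right hc.le
    rw [hz] at hle
    linarith
  have heq : LamStar n L r x = M := by
    refine le_antisymm ?_ hM_le
    rw [hlam0def, max_eq_left hM0] at hle
    exact hle
  exact ⟨heq ▸ hMS, fun v hv => heq ▸ hMmax v hv⟩
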